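/- Construction of a [2^{h+1}, 2 + 1/h, 2^{h+1} - 2] additive MDS code over F_{2^h}: let w be a primitive element of F_{2^{h+1}} and {1, α, ..., α^{h-1}} an F_2-basis of F_{2^h}. For (x_1, x_2) ∈ F_{2^h} × F_{2^{h+1}}, define the vector whose coordinate indexed by a ∈ F_{2^{h+1}} is x_1 + Σ_{j=0}^{h-1} Tr(x_2 a w^j) α^j, where Tr : F_{2^{h+1}} → F_2 is the trace. The resulting code C has size 2^{2h+1}, length n = 2^{h+1}, and minimum distance n - 2, i.e., every nonzero codeword has at most 2 zero coordinates. -/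

import Mathlib

/-- Construction of a `[2^{h+1}, 2 + 1/h, 2^{h+1} - 2]` additive MDS code over `F_{2^h}`:
with `F = F_2`, `E = F_{2^h}`, `L = F_{2^{h+1}}`, a primitive element `w` of `L` and an
`F`-basis `1, α, …, α^{h-1}` of `E`, the map sending `(x₁, x₂)` to the vector with coordinate
`x₁ + ∑_j Tr(x₂ a w^j) α^j` at `a ∈ L` gives an additive code of size `2^{2h+1}` in which
every nonzero codeword has at most 2 zero coordinates (minimum distance `n - 2`). -/
theorem additive_MDS_construction_q2_k3
    (h : ℕ) (F E L : Type)
    [Field F] [Fintype F] [Field E] [Fintype E] [DecidableEq E]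
    [Field L] [Fintype L] [DecidableEq L] [Algebra F E] [Algebra F L]
    (hh : 1 ≤ h)
    (hF : Fintype.card F = 2) (hE : Fintype.card E = 2 ^ h)
    (hL : Fintype.card L = 2 ^ (h + 1))
    (α : E) (hα : LinearIndependent F (fun j : Fin h => α ^ (j : ℕ)))
    (w : L) (hw : ∀ z : L, z ≠ 0 → ∃ t : ℕ, z = w ^ t)
    (c : E × L → L → E)
    (hc : ∀ x a, c x a =
      x.1 + ∑ j : Fin h, Algebra.trace F L (x.2 * a * w ^ (j : ℕ)) • α ^ (j : ℕ)) :
    (∀ x y : E × L, c (x + y) = c x + c y) ∧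
    Function.Injective c ∧
    Nat.card (Set.range c) = 2 ^ (2 * h + 1) ∧
    (∀ x : E × L, x ≠ 0 →
      (Finset.univ.filter (fun a : L => c x a = 0)).card ≤ 2) := by
  classical
  have hFD : FiniteDimensional F L := Module.Finite.of_finite
  -- the trace form is nondegenerate
  have htr : ∃ u : L, Algebra.trace F L u ≠ 0 := by
    by_contra hcon
    push_neg at hcon
    exact Algebra.trace_ne_zero F L (LinearMap.ext fun u => by simpa using hcon u)
  have keyA : ∀ b : L, b ≠ 0 → ∃ v : L, Algebra.trace F L (b * v) ≠ 0 := by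
    intro b hb
    obtain ⟨u, hu⟩ := htr
    exact ⟨b⁻¹ * u, by rwa [← mul_assoc, mul_inv_cancel₀ hb, one_mul]⟩
  -- the dimension of `L` over `F`
  have hrank : Module.finrank F L = h + 1 := by
    have hcard := Module.card_eq_pow_finrank (K := F) (V := L)
    rw [hL, hF] at hcard
    exact (Nat.pow_right_injective le_rfl hcard.symm)
  -- `w` generates `L` over `F`
  have hwint : IsIntegral F w := IsIntegral.of_finite F w
  have hadj : IntermediateField.adjoin F {w} = ⊤ := by
    rw [eq_top_iff]
    intro z _
    by_cases hz : z = 0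
    · exact hz ▸ zero_mem _
    · obtain ⟨t, rfl⟩ := hw z hz
      exact pow_mem (IntermediateField.mem_adjoin_simple_self F w) t
  have hdeg : (minpoly F w).natDegree = h + 1 := by
    rw [← IntermediateField.adjoin.finrank hwint, hadj, IntermediateField.finrank_top', hrank]
  have hindw : LinearIndependent F (fun j : Fin (h + 1) => w ^ (j : ℕ)) := by
    have := linearIndependent_pow (K := F) w
    rwa [hdeg] at this
  have hbcard : Fintype.card (Fin (h + 1)) = Module.finrank F L := by simp [hrank]
  let B : Module.Basis (Fin (h + 1)) F L := basisOfLinearIndependentOfCardEqFinrank hindw hbcard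
  have hBcoe : ∀ j : Fin (h + 1), B j = w ^ (j : ℕ) := fun j => by
    simp [B, coe_basisOfLinearIndependentOfCardEqFinrank]
  -- an element orthogonal to all powers of `w` is zero
  have keyC : ∀ b : L, (∀ j : Fin (h + 1), Algebra.trace F L (b * w ^ (j : ℕ)) = 0) → b = 0 := by
    intro b hb0
    by_contra hb
    obtain ⟨v, hv⟩ := keyA b hb
    apply hv
    let f : L →ₗ[F] F := (Algebra.trace F L) ∘ₗ (LinearMap.mulLeft F b)
    have hf : f = 0 := B.ext fun j => by
      simp only [f, LinearMap.comp_apply, LinearMap.mulLeft_apply, LinearMap.zero_apply,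
        hBcoe j, hb0 j]
    have hfv : f v = 0 := by rw [hf]; rfl
    simpa [f] using hfv
  -- a codeword vanishing everywhere comes from `0`
  have hzero : ∀ x : E × L, (∀ a, c x a = 0) → x = 0 := by
    intro x hx
    have h1 : x.1 = 0 := by
      have h0 := hx 0
      rw [hc] at h0
      simpa using h0
    have h2 : x.2 = 0 := by
      by_contra hx2
      obtain ⟨v, hv⟩ := keyA x.2 hx2
      apply hv
      have hxv := hx v
      rw [hc, h1, zero_add] at hxv
      have := Fintype.linearIndependent_iff.mp hα _ hxv ⟨0, hh⟩
      simpa using this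
    exact Prod.ext h1 h2
  -- additivity
  have hadd : ∀ x y : E × L, c (x + y) = c x + c y := by
    intro x y
    funext a
    simp only [hc, Pi.add_apply, Prod.fst_add, Prod.snd_add, add_mul, map_add, add_smul,
      Finset.sum_add_distrib]
    abel
  -- injectivity
  have hinj : Function.Injective c := by
    intro x y hxy
    have hsub : ∀ a, c (x - y) a = 0 := by
      intro a
      have hxya : c x a = c y a := congrFun hxy a
      rw [hc, hc] at hxya
      rw [hc]
      simp only [Prod.fst_sub, Prod.snd_sub, sub_mul, map_sub, sub_smul,
        Finset.sum_sub_distrib]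
      linear_combination hxya
    exact sub_eq_zero.mp (hzero (x - y) hsub)
  refine ⟨hadd, hinj, ?_, ?_⟩
  · -- cardinality
    rw [Nat.card_range_of_injective hinj, Nat.card_prod, Nat.card_eq_fintype_card,
      Nat.card_eq_fintype_card, hE, hL, ← pow_add]
    congr 1
    ring
  · -- weight bound
    intro x hx
    by_cases hx2 : x.2 = 0
    · have hx1 : x.1 ≠ 0 := by
        intro h1
        exact hx (Prod.ext h1 hx2)
      have hne : ∀ a : L, ¬ c x a = 0 := by
        intro a
        rw [hc, hx2]
        simpa using hx1
      rw [Finset.filter_eq_empty_iff.mpr fun a _ => hne a]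
      simp
    · have hle : (Finset.univ.filter fun a : L => c x a = 0).card ≤ Fintype.card F := by
        rw [← Finset.card_univ]
        apply Finset.card_le_card_of_injOn (fun a => Algebra.trace F L (x.2 * a * w ^ h))
          (fun a _ => Finset.mem_univ _)
        intro a1 h1 a2 h2 heq
        simp only [Finset.coe_filter, Set.mem_setOf_eq, Finset.mem_univ, true_and] at h1 h2
        rw [hc] at h1 h2
        have hsum : ∑ j : Fin h, (Algebra.trace F L (x.2 * a1 * w ^ (j : ℕ)) -
            Algebra.trace F L (x.2 * a2 * w ^ (j : ℕ))) • α ^ (j : ℕ) = 0 := by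
          simp only [sub_smul, Finset.sum_sub_distrib]
          linear_combination h1 - h2
        have hj : ∀ j : Fin h, Algebra.trace F L (x.2 * a1 * w ^ (j : ℕ)) =
            Algebra.trace F L (x.2 * a2 * w ^ (j : ℕ)) := fun j =>
          sub_eq_zero.mp (Fintype.linearIndependent_iff.mp hα _ hsum j)
        have hball : ∀ j : Fin (h + 1),
            Algebra.trace F L ((x.2 * (a1 - a2)) * w ^ (j : ℕ)) = 0 := by
          intro j
          have hjeq : Algebra.trace F L (x.2 * a1 * w ^ (j : ℕ)) =
              Algebra.trace F L (x.2 * a2 * w ^ (j : ℕ)) := by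
            rcases Nat.lt_or_ge (j : ℕ) h with hj' | hj'
            · exact hj ⟨(j : ℕ), hj'⟩
            · have hjh : (j : ℕ) = h := le_antisymm (Nat.lt_succ_iff.mp j.2) hj'
              rw [hjh]
              exact heq
          have : (x.2 * (a1 - a2)) * w ^ (j : ℕ) =
              x.2 * a1 * w ^ (j : ℕ) - x.2 * a2 * w ^ (j : ℕ) := by ring
          rw [this, map_sub, hjeq, sub_self]
        have hb0 := keyC _ hball
        have ha : a1 - a2 = 0 := by
          rcases mul_eq_zero.mp hb0 with h' | h'
          · exact absurd h' hx2
          · exact h'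
        exact sub_eq_zero.mp ha
      rwa [hF] at hle
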